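/- Let β > 0, S ⊆ ℝⁿ, F : ℝⁿ → ℝⁿ monotone on S, g : ℝⁿ → ℝ, and let sequences x, y, λ : ℕ → ℝⁿ satisfy for all k ≥ 0: x_{k+1} ∈ S; λ_{k+1} = λ_k + β(x_{k+1} − y_{k+1}); −λ_k − β(x_{k+1} − y_k) is a subgradient of x ↦ ⟨F(x_{k+1}), x⟩ at x_{k+1} relative to S; and λ_k is a subgradient of g at y_k for every k ≥ 0. Assume there exist x^μ ∈ S and λ^μ ∈ ℝⁿ such that −λ^μ is a subgradient of x ↦ ⟨F(x^μ), x⟩ at x^μ relative to S and λ^μ is a subgradient of g at x^μ. Then: (i) for every K, ∑_{k=0}^{K} [ (1/(2β))‖λ_{k+1} − λ_k‖² + (β/2)‖y_{k+1} − y_k‖² ] ≤ (1/(2β))‖λ_0 − λ^μ‖² + (β/2)‖y_0 − x^μ‖²; and (ii) x_k − y_k → 0 as k → ∞. -/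

import Mathlib

open scoped RealInnerProductSpace
open Filter

lemma stmt5_step {n : ℕ} (β : ℝ) (hβ : 0 < β)
    (p q r L L' Lμ Xμ : EuclideanSpace ℝ (Fin n))
    (hL' : L' = L + β • (p - r))
    (hA : 0 ≤ ⟪L + β • (p - q) - Lμ, Xμ - p⟫)
    (hB : 0 ≤ ⟪L' - Lμ, r - Xμ⟫)
    (hC : 0 ≤ ⟪L' - L, r - q⟫) :
    (1/(2*β)) * ‖L' - L‖^2 + (β/2) * ‖r - q‖^2
      ≤ ((1/(2*β)) * ‖L - Lμ‖^2 + (β/2) * ‖q - Xμ‖^2)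
        - ((1/(2*β)) * ‖L' - Lμ‖^2 + (β/2) * ‖r - Xμ‖^2) := by
  set a := L' - Lμ with ha
  set b := L' - L with hb
  set d := r - q with hd
  set e := r - Xμ with he
  have hbβ : b = β • (p - r) := by rw [hb, hL']; abel
  have hrp : r - p = -((1/β) • b) := by
    rw [hbβ, smul_smul, one_div_mul_cancel hβ.ne', one_smul, neg_sub]
  have hA' : 0 ≤ ⟪a + β • d, (r - p) - e⟫ := by
    have h1 : L + β • (p - q) - Lμ = a + β • d := by
      rw [ha, hd, hL']
      have h2 : p - q = (p - r) + (r - q) := by abel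
      rw [h2, smul_add]; abel
    have h3 : Xμ - p = (r - p) - e := by rw [he]; abel
    rw [← h1, ← h3]; exact hA
  rw [hrp] at hA'
  simp only [inner_add_left, inner_sub_right, inner_neg_right, real_inner_smul_left,
    real_inner_smul_right] at hA' hB hC
  have hkey : (1/β) * ⟪a, b⟫ + β * ⟪d, e⟫ ≤ 0 := by
    have hcomm : ⟪d, b⟫ = ⟪b, d⟫ := real_inner_comm b d
    have hββ : β * (1/β) = 1 := by field_simp
    nlinarith [hA', hB, hC]
  have hL : L - Lμ = a - b := by rw [ha, hb]; abel
  have hq : q - Xμ = e - d := by rw [he, hd]; abel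
  rw [hL, hq, norm_sub_sq_real a b, norm_sub_sq_real e d]
  have hcomm2 : ⟪e, d⟫ = ⟪d, e⟫ := real_inner_comm d e
  have h2β : (0:ℝ) < 2*β := by linarith
  rw [hcomm2]
  have expand : ((1/(2*β)) * (‖a‖^2 - 2*⟪a,b⟫ + ‖b‖^2) + (β/2) * (‖e‖^2 - 2*⟪d,e⟫ + ‖d‖^2))
      - ((1/(2*β)) * ‖a‖^2 + (β/2) * ‖e‖^2)
      - ((1/(2*β)) * ‖b‖^2 + (β/2) * ‖d‖^2)
      = -((1/β) * ⟪a,b⟫ + β * ⟪d,e⟫) := by field_simp; ring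
  linarith [expand]

/-- Theorem 3.1: along the exact ACVI iteration (at a fixed barrier
weight μ, encoded by the subgradient conditions), the per-step increments are
summably bounded and `xₖ - yₖ → 0`. -/
theorem stmt5 {n : ℕ} (β : ℝ) (hβ : 0 < β) (S : Set (EuclideanSpace ℝ (Fin n)))
    (F : EuclideanSpace ℝ (Fin n) → EuclideanSpace ℝ (Fin n))
    (g : EuclideanSpace ℝ (Fin n) → ℝ)
    (x y lam : ℕ → EuclideanSpace ℝ (Fin n))
    (hmono : ∀ u ∈ S, ∀ v ∈ S, 0 ≤ ⟪F u - F v, u - v⟫)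
    (hxS : ∀ k, x (k+1) ∈ S)
    (hlam : ∀ k, lam (k+1) = lam k + β • (x (k+1) - y (k+1)))
    (hfsub : ∀ k, ∀ z ∈ S,
      ⟪F (x (k+1)), z⟫ ≥ ⟪F (x (k+1)), x (k+1)⟫
        + ⟪-(lam k) - β • (x (k+1) - y k), z - x (k+1)⟫)
    (hgsub : ∀ k, ∀ z, g z ≥ g (y k) + ⟪lam k, z - y k⟫)
    (xμ lamμ : EuclideanSpace ℝ (Fin n)) (hxμ : xμ ∈ S)
    (hfμ : ∀ z ∈ S, ⟪F xμ, z⟫ ≥ ⟪F xμ, xμ⟫ + ⟪-lamμ, z - xμ⟫)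
    (hgμ : ∀ z, g z ≥ g xμ + ⟪lamμ, z - xμ⟫) :
    (∀ K : ℕ, ∑ k ∈ Finset.range (K+1),
        ((1/(2*β)) * ‖lam (k+1) - lam k‖^2 + (β/2) * ‖y (k+1) - y k‖^2)
      ≤ (1/(2*β)) * ‖lam 0 - lamμ‖^2 + (β/2) * ‖y 0 - xμ‖^2) ∧
    Tendsto (fun k => x k - y k) atTop (nhds 0) := by
  set V : ℕ → ℝ := fun k => (1/(2*β)) * ‖lam k - lamμ‖^2 + (β/2) * ‖y k - xμ‖^2 with hV
  set T : ℕ → ℝ := fun k =>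
    (1/(2*β)) * ‖lam (k+1) - lam k‖^2 + (β/2) * ‖y (k+1) - y k‖^2 with hT
  have hTnonneg : ∀ k, 0 ≤ T k := by
    intro k
    have h1 : (0:ℝ) < 1/(2*β) := by positivity
    have h2 : (0:ℝ) < β/2 := by positivity
    positivity
  have hVnonneg : ∀ k, 0 ≤ V k := by
    intro k
    have h1 : (0:ℝ) < 1/(2*β) := by positivity
    positivity
  have hkey : ∀ k, T k ≤ V k - V (k+1) := by
    intro k
    have hA : 0 ≤ ⟪lam k + β • (x (k+1) - y k) - lamμ, xμ - x (k+1)⟫ := by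
      have h1 := hfsub k xμ hxμ
      have h2 := hfμ (x (k+1)) (hxS k)
      have h3 := hmono (x (k+1)) (hxS k) xμ hxμ
      simp only [inner_sub_left, inner_sub_right, inner_add_left, inner_neg_left,
        real_inner_smul_left] at h1 h2 h3 ⊢
      linarith
    have hB : 0 ≤ ⟪lam (k+1) - lamμ, y (k+1) - xμ⟫ := by
      have h1 := hgμ (y (k+1))
      have h2 := hgsub (k+1) xμ
      simp only [inner_sub_left, inner_sub_right] at h1 h2 ⊢
      linarith
    have hC : 0 ≤ ⟪lam (k+1) - lam k, y (k+1) - y k⟫ := by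
      have h1 := hgsub (k+1) (y k)
      have h2 := hgsub k (y (k+1))
      simp only [inner_sub_left, inner_sub_right] at h1 h2 ⊢
      linarith
    have := stmt5_step β hβ (x (k+1)) (y k) (y (k+1)) (lam k) (lam (k+1)) lamμ xμ
      (hlam k) hA hB hC
    simpa [hT, hV] using this
  have hsum : ∀ K : ℕ, ∑ k ∈ Finset.range (K+1), T k ≤ V 0 - V (K+1) := by
    intro K
    induction K with
    | zero => simpa using hkey 0
    | succ K ih =>
      rw [Finset.sum_range_succ]
      have := hkey (K+1)
      linarith
  have hbound : ∀ K : ℕ, ∑ k ∈ Finset.range (K+1), T k ≤ V 0 := by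
    intro K
    have := hVnonneg (K+1)
    linarith [hsum K]
  refine ⟨hbound, ?_⟩
  -- Summability and tendsto
  have hboundall : ∀ m : ℕ, ∑ k ∈ Finset.range m, T k ≤ V 0 := by
    intro m
    cases m with
    | zero => simpa using hVnonneg 0
    | succ K => exact hbound K
  have hsummable : Summable T := summable_of_sum_range_le hTnonneg hboundall
  have hTzero : Tendsto T atTop (nhds 0) := hsummable.tendsto_atTop_zero
  have hsq : ∀ k, ‖x (k+1) - y (k+1)‖^2 ≤ (2/β) * T k := by
    intro k
    have hl : lam (k+1) - lam k = β • (x (k+1) - y (k+1)) := by rw [hlam k]; abel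
    have hn : ‖lam (k+1) - lam k‖^2 = β^2 * ‖x (k+1) - y (k+1)‖^2 := by
      rw [hl, norm_smul, Real.norm_eq_abs, abs_of_pos hβ, mul_pow]
    have h2 : (0:ℝ) ≤ (β/2) * ‖y (k+1) - y k‖^2 := by positivity
    have : (2/β) * T k = ‖x (k+1) - y (k+1)‖^2 + (2/β) * ((β/2) * ‖y (k+1) - y k‖^2) := by
      rw [hT]
      simp only []
      rw [hn]
      field_simp
    rw [this]
    have : (0:ℝ) ≤ (2/β) * ((β/2) * ‖y (k+1) - y k‖^2) := by positivity
    linarith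
  have hsq0 : Tendsto (fun k => ‖x (k+1) - y (k+1)‖^2) atTop (nhds 0) := by
    have hub : Tendsto (fun k => (2/β) * T k) atTop (nhds 0) := by
      have h := hTzero.const_mul (2/β)
      rwa [mul_zero] at h
    exact squeeze_zero (fun k => by positivity) hsq hub
  have hnorm0 : Tendsto (fun k => ‖x (k+1) - y (k+1)‖) atTop (nhds 0) := by
    have hsqrt : Tendsto (fun k => Real.sqrt (‖x (k+1) - y (k+1)‖^2)) atTop (nhds (Real.sqrt 0)) :=
      (Real.continuous_sqrt.tendsto 0).comp hsq0
    simp only [Real.sqrt_zero] at hsqrt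
    have heq : (fun k => Real.sqrt (‖x (k+1) - y (k+1)‖^2)) = fun k => ‖x (k+1) - y (k+1)‖ := by
      funext k
      exact Real.sqrt_sq (norm_nonneg _)
    rwa [heq] at hsqrt
  have h3 : Tendsto (fun k => x (k+1) - y (k+1)) atTop (nhds 0) :=
    tendsto_zero_iff_norm_tendsto_zero.mpr hnorm0
  have h4 : Tendsto (fun k => (fun m => x m - y m) (k + 1)) atTop (nhds 0) := h3
  exact (tendsto_add_atTop_iff_nat 1).mp h4
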